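/- Power-type consequence of the convexity inequality: for p ≥ 2, 0 < α < 1 and a nonnegative function ω ∈ C¹([0,T]), one has |ω(t)|^((p−2)/2)·D^α ω(t) ≥ (2/p)·D^α(|ω|^(p/2))(t) for t ∈ (0,T], where D^α is the left Caputo derivative. -/

import Mathlib

/-- The left Caputo fractional derivative of order `α`. -/
noncomputable def caputo (α : ℝ) (u : ℝ → ℝ) (t : ℝ) : ℝ :=
  (1 / Real.Gamma (1 - α)) * ∫ s in (0:ℝ)..t, (t - s) ^ (-α) * deriv u s

section
open Set MeasureTheory intervalIntegral Filter Topology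

lemma tangent_ineq {q a c : ℝ} (hq : 1 ≤ q) (ha : 0 ≤ a) (hc : 0 ≤ c) :
    c ^ q + q * c ^ (q - 1) * (a - c) ≤ a ^ q := by
  rcases eq_or_lt_of_le hc with h0 | hc
  · rw [← h0]
    rcases eq_or_lt_of_le hq with hq1 | hq1
    · rw [← hq1]; simp [Real.rpow_one]
    · rw [Real.zero_rpow (by positivity), Real.zero_rpow (by linarith)]
      simpa using Real.rpow_nonneg ha q
  · have hx : (-1:ℝ) ≤ a / c - 1 := by
      have : 0 ≤ a / c := div_nonneg ha hc.le
      linarith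
    have hB := one_add_mul_self_le_rpow_one_add hx hq
    rw [show (1:ℝ) + (a / c - 1) = a / c by ring, Real.div_rpow ha hc.le] at hB
    have hcq : 0 < c ^ q := Real.rpow_pos_of_pos hc q
    have h2 := mul_le_mul_of_nonneg_right hB hcq.le
    rw [div_mul_cancel₀ _ hcq.ne'] at h2
    calc c ^ q + q * c ^ (q - 1) * (a - c)
        = (1 + q * (a / c - 1)) * c ^ q := by
          rw [Real.rpow_sub hc, Real.rpow_one]; field_simp
      _ ≤ a ^ q := h2


lemma key_ineq {t α : ℝ} (ht : 0 < t) (hα0 : 0 < α) (hα1 : α < 1)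
    (F F' : ℝ → ℝ)
    (hder : ∀ s ∈ Icc (0:ℝ) t, HasDerivWithinAt F (F' s) (Icc 0 t) s)
    (hc' : ContinuousOn F' (Icc 0 t))
    (hF0 : ∀ s ∈ Icc (0:ℝ) t, 0 ≤ F s)
    (hFt : F t = 0) :
    ∫ s in (0:ℝ)..t, (t - s) ^ (-α) * F' s ≤ 0 := by
  have hFc : ContinuousOn F (Icc 0 t) := fun s hs => (hder s hs).continuousWithinAt
  -- bound on F'
  obtain ⟨M0, hM0⟩ := isCompact_Icc.exists_bound_of_continuousOn hc'
  set M := max M0 0 with hMdef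
  have hM : ∀ s ∈ Icc (0:ℝ) t, |F' s| ≤ M := fun s hs =>
    (hM0 s hs).trans (le_max_left _ _)
  have hMnn : 0 ≤ M := le_max_right _ _
  -- interior derivatives
  have hderiv : ∀ s ∈ Ioo (0:ℝ) t, HasDerivAt F (F' s) s := fun s hs =>
    (hder s (Ioo_subset_Icc_self hs)).hasDerivAt (Icc_mem_nhds hs.1 hs.2)
  -- kernel integrability
  have hk : IntervalIntegrable (fun s => (t - s) ^ (-α)) volume 0 t := by
    have h1 : IntervalIntegrable (fun x : ℝ => x ^ (-α)) volume 0 t :=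
      intervalIntegral.intervalIntegrable_rpow' (by linarith)
    have h2 := h1.comp_sub_left t
    simpa using h2.symm
  -- integrand integrability
  have hg : IntervalIntegrable (fun s => (t - s) ^ (-α) * F' s) volume 0 t := by
    rw [intervalIntegrable_iff, uIoc_of_le ht.le, integrableOn_Ioc_iff_integrableOn_Ioo]
    have hkk : IntegrableOn (fun s => M * (t - s) ^ (-α)) (Ioo 0 t) volume := by
      have h1 : IntegrableOn (fun s : ℝ => (t - s) ^ (-α)) (Ioc 0 t) volume := hk.1
      rw [integrableOn_Ioc_iff_integrableOn_Ioo] at h1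
      exact h1.const_mul M
    refine Integrable.mono' hkk ?_ ?_
    · -- AEStronglyMeasurable
      have hck : ContinuousOn (fun s : ℝ => (t - s) ^ (-α)) (Ioo 0 t) :=
        ((continuous_const.sub continuous_id).continuousOn).rpow_const
          (fun x hx => Or.inl (by have := hx.2; intro h; rw [sub_eq_zero] at h; exact absurd h (by rintro rfl; linarith) : t - x ≠ 0))
      exact (hck.mul (hc'.mono Ioo_subset_Icc_self)).aestronglyMeasurable measurableSet_Ioo
    · refine (ae_restrict_iff' measurableSet_Ioo).2 (Filter.Eventually.of_forall ?_)
      intro s hs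
      have hts : 0 ≤ t - s := by linarith [hs.2]
      have hknn : 0 ≤ (t - s) ^ (-α) := Real.rpow_nonneg hts _
      rw [norm_mul, Real.norm_eq_abs, Real.norm_eq_abs, abs_of_nonneg hknn]
      rw [mul_comm M]
      exact mul_le_mul_of_nonneg_left (hM s ⟨hs.1.le, hs.2.le⟩) hknn
  -- main estimate on [ε, t-ε]
  have hest : ∀ ε : ℝ, ε ∈ Ioo 0 (t/2) →
      (∫ s in ε..(t-ε), (t - s) ^ (-α) * F' s) ≤ M * ε ^ (1-α) := by
    intro ε hε
    have hε0 : 0 < ε := hε.1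
    have hab : ε ≤ t - ε := by linarith [hε.2]
    have hbt : t - ε < t := by linarith
    have hsub : Icc ε (t-ε) ⊆ Icc 0 t := Icc_subset_Icc (by linarith) (by linarith)
    have hpos : ∀ x ∈ Icc ε (t-ε), 0 < t - x := fun x hx => by
      rcases hx with ⟨_, h2⟩; linarith
    -- IBP
    have hG : ∀ x ∈ uIcc ε (t-ε),
        HasDerivAt (fun s => (t - s) ^ (-α) * F s)
          (α * (t - x) ^ (-α - 1) * F x + (t - x) ^ (-α) * F' x) x := by
      intro x hx
      rw [uIcc_of_le hab] at hx
      have htx : 0 < t - x := hpos x hx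
      have h1 : HasDerivAt (fun s : ℝ => (t - s) ^ (-α)) (α * (t - x) ^ (-α - 1)) x := by
        have hr : HasDerivAt (fun y : ℝ => y ^ (-α)) (-α * (t - x) ^ (-α - 1)) (t - x) :=
          Real.hasDerivAt_rpow_const (Or.inl htx.ne')
        have hu : HasDerivAt (fun s : ℝ => t - s) (-1) x := by
          simpa using (hasDerivAt_id x).const_sub t
        have := hr.comp x hu
        exact this.congr_deriv (by ring)
      have h2 : HasDerivAt F (F' x) x :=
        hderiv x ⟨lt_of_lt_of_le hε0 hx.1, lt_of_le_of_lt hx.2 hbt⟩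
      have := h1.mul h2
      exact this.congr_deriv (by ring)
    have hG'int : IntervalIntegrable
        (fun x => α * (t - x) ^ (-α - 1) * F x + (t - x) ^ (-α) * F' x)
        volume ε (t-ε) := by
      apply ContinuousOn.intervalIntegrable
      rw [uIcc_of_le hab]
      have hcc : ContinuousOn (fun x : ℝ => t - x) (Icc ε (t-ε)) :=
        (continuous_const.sub continuous_id).continuousOn
      have hk1 : ContinuousOn (fun x : ℝ => (t - x) ^ (-α - 1)) (Icc ε (t-ε)) :=
        hcc.rpow_const (fun x hx => Or.inl (hpos x hx).ne')
      have hk2 : ContinuousOn (fun x : ℝ => (t - x) ^ (-α)) (Icc ε (t-ε)) :=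
        hcc.rpow_const (fun x hx => Or.inl (hpos x hx).ne')
      exact ((continuousOn_const.mul hk1).mul (hFc.mono hsub)).add
        (hk2.mul (hc'.mono hsub))
    have hibp := intervalIntegral.integral_eq_sub_of_hasDerivAt hG hG'int
    -- split
    have hint1 : IntervalIntegrable (fun x => α * (t - x) ^ (-α - 1) * F x) volume ε (t-ε) := by
      apply ContinuousOn.intervalIntegrable
      rw [uIcc_of_le hab]
      exact (continuousOn_const.mul
        (((continuous_const.sub continuous_id).continuousOn).rpow_const
          (fun x hx => Or.inl (hpos x hx).ne'))).mul (hFc.mono hsub)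
    have hint2 : IntervalIntegrable (fun x => (t - x) ^ (-α) * F' x) volume ε (t-ε) := by
      apply ContinuousOn.intervalIntegrable
      rw [uIcc_of_le hab]
      exact (((continuous_const.sub continuous_id).continuousOn).rpow_const
          (fun x hx => Or.inl (hpos x hx).ne')).mul (hc'.mono hsub)
    have hsplit : (∫ x in ε..(t-ε), (α * (t - x) ^ (-α - 1) * F x + (t - x) ^ (-α) * F' x))
        = (∫ x in ε..(t-ε), α * (t - x) ^ (-α - 1) * F x)
          + ∫ x in ε..(t-ε), (t - x) ^ (-α) * F' x :=
      intervalIntegral.integral_add hint1 hint2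
    have hnn : 0 ≤ ∫ x in ε..(t-ε), α * (t - x) ^ (-α - 1) * F x := by
      apply intervalIntegral.integral_nonneg hab
      intro x hx
      have := hpos x hx
      have := hF0 x (hsub hx)
      positivity
    have hFa : 0 ≤ F ε := hF0 ε (hsub ⟨le_rfl, hab⟩)
    have hka : 0 ≤ (t - ε) ^ (-α) := Real.rpow_nonneg (by linarith) _
    -- bound F (t-ε)
    have hFb : F (t-ε) ≤ M * ε := by
      have := Convex.norm_image_sub_le_of_norm_hasDerivWithin_le hder
        (fun x hx => hM x hx) (convex_Icc 0 t)
        (show t ∈ Icc (0:ℝ) t from ⟨ht.le, le_rfl⟩)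
        (show t - ε ∈ Icc (0:ℝ) t from ⟨by linarith, by linarith⟩)
      rw [hFt, sub_zero, Real.norm_eq_abs, Real.norm_eq_abs] at this
      have h2 : |t - ε - t| = ε := by rw [show t - ε - t = -ε by ring, abs_neg, abs_of_pos hε0]
      rw [h2] at this
      exact (le_abs_self _).trans this
    have key : (∫ s in ε..(t-ε), (t - s) ^ (-α) * F' s)
        = (t - (t-ε)) ^ (-α) * F (t-ε) - (t - ε) ^ (-α) * F ε
          - ∫ x in ε..(t-ε), α * (t - x) ^ (-α - 1) * F x := by
      rw [← hibp, hsplit]; ring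
    rw [key]
    have hεα : 0 ≤ ε ^ (-α) := Real.rpow_nonneg hε0.le _
    have h1 : (t - (t-ε)) ^ (-α) * F (t-ε) ≤ ε ^ (-α) * (M * ε) := by
      rw [show t - (t-ε) = ε by ring]
      exact mul_le_mul_of_nonneg_left hFb hεα
    have h2 : ε ^ (-α) * (M * ε) = M * ε ^ (1-α) := by
      rw [show (1:ℝ) - α = -α + 1 by ring, Real.rpow_add hε0, Real.rpow_one]
      ring
    nlinarith [mul_nonneg hka hFa]
  -- limit argument
  set g : ℝ → ℝ := fun s => (t - s) ^ (-α) * F' s with hgdef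
  have hgIcc : IntegrableOn g (Icc 0 t) volume := by
    rw [integrableOn_Icc_iff_integrableOn_Ioc]
    exact hg.1
  set P : ℝ → ℝ := fun x => ∫ s in (0:ℝ)..x, g s with hPdef
  have hPc : ContinuousOn P (Icc 0 t) := by
    have := intervalIntegral.continuousOn_primitive_interval
      (f := g) (a := (0:ℝ)) (b := t) (by rwa [uIcc_of_le ht.le])
    rwa [uIcc_of_le ht.le] at this
  have heq : ∀ ε ∈ Ioo (0:ℝ) (t/2), (∫ s in ε..(t-ε), g s) = P (t-ε) - P ε := by
    intro ε hε
    have hs1 : uIcc (0:ℝ) (t-ε) ⊆ uIcc (0:ℝ) t := by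
      rw [uIcc_of_le ht.le, uIcc_of_le (by linarith [hε.1, hε.2] : (0:ℝ) ≤ t - ε)]
      exact Icc_subset_Icc le_rfl (by linarith [hε.1])
    have hs2 : uIcc (0:ℝ) ε ⊆ uIcc (0:ℝ) t := by
      rw [uIcc_of_le ht.le, uIcc_of_le hε.1.le]
      exact Icc_subset_Icc le_rfl (by linarith [hε.2])
    have h1 : IntervalIntegrable g volume 0 (t-ε) := hg.mono_set hs1
    have h2 : IntervalIntegrable g volume 0 ε := hg.mono_set hs2
    exact (intervalIntegral.integral_interval_sub_left h1 h2).symm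
  have hmem : Ioo (0:ℝ) (t/2) ∈ 𝓝[>] (0:ℝ) :=
    Ioo_mem_nhdsGT_of_mem ⟨le_rfl, half_pos ht⟩
  have hlim1 : Tendsto (fun ε => ∫ s in ε..(t-ε), g s) (𝓝[>] (0:ℝ)) (𝓝 (P t)) := by
    have ht1 : Tendsto (fun ε : ℝ => t - ε) (𝓝[>] (0:ℝ)) (𝓝[Icc 0 t] t) := by
      rw [tendsto_nhdsWithin_iff]
      constructor
      · have h0 : Tendsto (fun ε : ℝ => t - ε) (𝓝 (0:ℝ)) (𝓝 (t - 0)) :=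
          tendsto_const_nhds.sub tendsto_id
        rw [sub_zero] at h0
        exact h0.mono_left nhdsWithin_le_nhds
      · filter_upwards [hmem] with ε hε
        exact ⟨by linarith [hε.1, hε.2], by linarith [hε.1]⟩
    have ht2 : Tendsto (fun ε : ℝ => ε) (𝓝[>] (0:ℝ)) (𝓝[Icc 0 t] 0) := by
      rw [tendsto_nhdsWithin_iff]
      refine ⟨tendsto_id.mono_left nhdsWithin_le_nhds, ?_⟩
      filter_upwards [hmem] with ε hε
      exact ⟨hε.1.le, by linarith [hε.2]⟩
    have hA := ((hPc t ⟨ht.le, le_rfl⟩).tendsto).comp ht1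
    have hB := ((hPc 0 ⟨le_rfl, ht.le⟩).tendsto).comp ht2
    have hP0 : P 0 = 0 := intervalIntegral.integral_same
    rw [hP0] at hB
    have := hA.sub hB
    rw [sub_zero] at this
    apply this.congr'
    filter_upwards [hmem] with ε hε
    exact (heq ε hε).symm
  have hlim2 : Tendsto (fun ε : ℝ => M * ε ^ (1-α)) (𝓝[>] (0:ℝ)) (𝓝 0) := by
    have h1 : ContinuousAt (fun x : ℝ => x ^ (1-α)) 0 :=
      Real.continuousAt_rpow_const 0 (1-α) (Or.inr (by linarith))
    have h2 : Tendsto (fun ε : ℝ => ε ^ (1-α)) (𝓝[>] (0:ℝ)) (𝓝 ((0:ℝ) ^ (1-α))) :=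
      (h1.tendsto).mono_left nhdsWithin_le_nhds
    rw [Real.zero_rpow (by linarith)] at h2
    simpa using h2.const_mul M
  have hfin : P t ≤ 0 := by
    refine le_of_tendsto_of_tendsto hlim1 hlim2 ?_
    filter_upwards [hmem] with ε hε
    exact hest ε hε
  exact hfin


lemma integ_aux {t T α : ℝ} (ht : 0 < t) (htT : t ≤ T) (hα0 : 0 < α) (hα1 : α < 1)
    (u : ℝ → ℝ) (hu : ContDiffOn ℝ 1 u (Icc 0 T)) :
    IntervalIntegrable (fun s => (t - s) ^ (-α) * deriv u s) volume 0 t := by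
  have hT : (0:ℝ) < T := lt_of_lt_of_le ht htT
  set D := derivWithin u (Icc 0 T) with hD
  have hDc : ContinuousOn D (Icc 0 T) :=
    hu.continuousOn_derivWithin (uniqueDiffOn_Icc hT) le_rfl
  have heq : ∀ s ∈ Ioo (0:ℝ) t, deriv u s = D s := by
    intro s hs
    exact (derivWithin_of_mem_nhds (Icc_mem_nhds hs.1 (lt_of_lt_of_le hs.2 htT))).symm
  obtain ⟨M0, hM0⟩ := isCompact_Icc.exists_bound_of_continuousOn hDc
  set M := max M0 0 with hMdef
  have hMnn : (0:ℝ) ≤ M := le_max_right _ _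
  have hM : ∀ s ∈ Icc (0:ℝ) T, |D s| ≤ M := fun s hs => (hM0 s hs).trans (le_max_left _ _)
  have hk : IntervalIntegrable (fun s => (t - s) ^ (-α)) volume 0 t := by
    have h1 : IntervalIntegrable (fun x : ℝ => x ^ (-α)) volume 0 t :=
      intervalIntegral.intervalIntegrable_rpow' (by linarith)
    simpa using (h1.comp_sub_left t).symm
  rw [intervalIntegrable_iff, uIoc_of_le ht.le, integrableOn_Ioc_iff_integrableOn_Ioo]
  have hkk : IntegrableOn (fun s => M * (t - s) ^ (-α)) (Ioo 0 t) volume := by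
    have h1 : IntegrableOn (fun s : ℝ => (t - s) ^ (-α)) (Ioc 0 t) volume := hk.1
    rw [integrableOn_Ioc_iff_integrableOn_Ioo] at h1
    exact h1.const_mul M
  have haux : IntegrableOn (fun s => (t - s) ^ (-α) * D s) (Ioo 0 t) volume := by
    refine Integrable.mono' hkk ?_ ?_
    · have hck : ContinuousOn (fun s : ℝ => (t - s) ^ (-α)) (Ioo 0 t) :=
        ((continuous_const.sub continuous_id).continuousOn).rpow_const
          (fun x hx => Or.inl (by simpa using sub_ne_zero.mpr hx.2.ne'))
      have hsub : Ioo (0:ℝ) t ⊆ Icc 0 T := fun x hx => ⟨hx.1.le, le_trans hx.2.le htT⟩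
      exact (hck.mul (hDc.mono hsub)).aestronglyMeasurable measurableSet_Ioo
    · refine (ae_restrict_iff' measurableSet_Ioo).2 (Filter.Eventually.of_forall ?_)
      intro s hs
      have hts : 0 ≤ t - s := by linarith [hs.2]
      have hknn : 0 ≤ (t - s) ^ (-α) := Real.rpow_nonneg hts _
      rw [norm_mul, Real.norm_eq_abs, Real.norm_eq_abs, abs_of_nonneg hknn, mul_comm M]
      exact mul_le_mul_of_nonneg_left (hM s ⟨hs.1.le, le_trans hs.2.le htT⟩) hknn
  refine haux.congr_fun (fun s hs => ?_) measurableSet_Ioo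
  rw [heq s hs]
theorem stmt_17 (T α p : ℝ) (hT : 0 < T) (hα0 : 0 < α) (hα1 : α < 1) (hp : 2 ≤ p)
    (ω : ℝ → ℝ) (hnonneg : ∀ t ∈ Set.Icc (0:ℝ) T, 0 ≤ ω t)
    (hω : ContDiffOn ℝ 1 ω (Set.Icc 0 T))
    (hωp : ContDiffOn ℝ 1 (fun s => |ω s| ^ (p / 2)) (Set.Icc 0 T)) :
    ∀ t ∈ Set.Ioc (0:ℝ) T,
      (2 / p) * caputo α (fun s => |ω s| ^ (p / 2)) t ≤
        |ω t| ^ ((p - 2) / 2) * caputo α ω t := by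
  simp only [caputo]
  intro t ht
  obtain ⟨ht0, htT⟩ := ht
  have hp0 : (0:ℝ) < p := by linarith
  set g : ℝ → ℝ := fun s => |ω s| ^ (p / 2) with hgdef
  have hsub : Icc (0:ℝ) t ⊆ Icc 0 T := Icc_subset_Icc le_rfl htT
  set c : ℝ := ω t with hcdef
  have hcnn : 0 ≤ c := hnonneg t ⟨ht0.le, htT⟩
  set c' : ℝ := c ^ ((p - 2) / 2) with hc'def
  have hc'nn : 0 ≤ c' := Real.rpow_nonneg hcnn _
  set Dg : ℝ → ℝ := derivWithin g (Icc 0 T) with hDgdef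
  set Dω : ℝ → ℝ := derivWithin ω (Icc 0 T) with hDωdef
  set F : ℝ → ℝ := fun s => (2/p) * g s - (2/p) * g t - c' * (ω s - c) with hFdef
  set F' : ℝ → ℝ := fun s => (2/p) * Dg s - c' * Dω s with hF'def
  -- values of g on [0,T]
  have hgval : ∀ s ∈ Icc (0:ℝ) T, g s = (ω s) ^ (p / 2) := by
    intro s hs
    simp only [hgdef, abs_of_nonneg (hnonneg s hs)]
  -- derivatives
  have hderg : ∀ s ∈ Icc (0:ℝ) t, HasDerivWithinAt g (Dg s) (Icc 0 t) s := fun s hs =>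
    ((hωp.differentiableOn one_ne_zero s (hsub hs)).hasDerivWithinAt).mono hsub
  have hderω : ∀ s ∈ Icc (0:ℝ) t, HasDerivWithinAt ω (Dω s) (Icc 0 t) s := fun s hs =>
    ((hω.differentiableOn one_ne_zero s (hsub hs)).hasDerivWithinAt).mono hsub
  have hderF : ∀ s ∈ Icc (0:ℝ) t, HasDerivWithinAt F (F' s) (Icc 0 t) s := by
    intro s hs
    have h1 := ((hderg s hs).const_mul (2/p)).sub_const ((2/p) * g t)
    have h2 := ((hderω s hs).sub_const c).const_mul c'
    have := h1.sub h2
    exact this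
  have hcontF' : ContinuousOn F' (Icc 0 t) := by
    have h1 : ContinuousOn Dg (Icc 0 T) :=
      hωp.continuousOn_derivWithin (uniqueDiffOn_Icc hT) le_rfl
    have h2 : ContinuousOn Dω (Icc 0 T) :=
      hω.continuousOn_derivWithin (uniqueDiffOn_Icc hT) le_rfl
    exact (continuousOn_const.mul (h1.mono hsub)).sub
      (continuousOn_const.mul (h2.mono hsub))
  -- nonnegativity of F
  have hF0 : ∀ s ∈ Icc (0:ℝ) t, 0 ≤ F s := by
    intro s hs
    have ha : 0 ≤ ω s := hnonneg s (hsub hs)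
    have htan := tangent_ineq (q := p/2) (a := ω s) (c := c) (by linarith) ha hcnn
    have hq2 : (p - 2) / 2 = p / 2 - 1 := by ring
    have hgs : g s = (ω s) ^ (p/2) := hgval s (hsub hs)
    have hgt : g t = c ^ (p/2) := hgval t ⟨ht0.le, htT⟩
    simp only [hFdef, hgs, hgt, hc'def, hq2]
    set A := (ω s) ^ (p/2)
    set B := c ^ (p/2)
    set R := c ^ (p/2 - 1) * (ω s - c)
    have h3 : R ≤ (2/p) * (A - B) := by
      have h4 : (p/2) * R ≤ A - B := by
        have : B + (p/2) * c ^ (p/2-1) * (ω s - c) ≤ A := htan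
        simp only [R]; nlinarith [this]
      have h5 := mul_le_mul_of_nonneg_left h4 (by positivity : (0:ℝ) ≤ 2/p)
      calc R = (2/p) * ((p/2) * R) := by field_simp
        _ ≤ (2/p) * (A - B) := h5
    nlinarith [h3]
  have hFt : F t = 0 := by simp [hFdef, hcdef]
  -- key inequality
  have hkey := key_ineq ht0 hα0 hα1 F F' hderF hcontF' hF0 hFt
  -- integrability
  have h1 : IntervalIntegrable (fun s => (t - s) ^ (-α) * deriv g s) volume 0 t :=
    integ_aux ht0 htT hα0 hα1 g hωp
  have h2 : IntervalIntegrable (fun s => (t - s) ^ (-α) * deriv ω s) volume 0 t :=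
    integ_aux ht0 htT hα0 hα1 ω hω
  -- rewrite the F' integral
  have hae : ∀ᵐ x : ℝ ∂volume, x ≠ t := by
    rw [MeasureTheory.ae_iff]
    simp [Real.volume_singleton]
  have hE : (∫ s in (0:ℝ)..t, (t - s) ^ (-α) * F' s)
      = (2/p) * (∫ s in (0:ℝ)..t, (t - s) ^ (-α) * deriv g s)
        - c' * (∫ s in (0:ℝ)..t, (t - s) ^ (-α) * deriv ω s) := by
    have hcongr : (∫ s in (0:ℝ)..t, (t - s) ^ (-α) * F' s)
        = ∫ s in (0:ℝ)..t, ((2/p) * ((t - s) ^ (-α) * deriv g s)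
            - c' * ((t - s) ^ (-α) * deriv ω s)) := by
      apply intervalIntegral.integral_congr_ae
      filter_upwards [hae] with x hx hxI
      rw [uIoc_of_le ht0.le] at hxI
      have hxIoo : x ∈ Ioo (0:ℝ) t := ⟨hxI.1, lt_of_le_of_ne hxI.2 hx⟩
      have hnb : Icc (0:ℝ) T ∈ 𝓝 x := Icc_mem_nhds hxIoo.1 (lt_of_lt_of_le hxIoo.2 htT)
      have e1 : deriv g x = Dg x := (derivWithin_of_mem_nhds hnb).symm
      have e2 : deriv ω x = Dω x := (derivWithin_of_mem_nhds hnb).symm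
      rw [e1, e2]
      simp only [hF'def]
      ring
    rw [hcongr, intervalIntegral.integral_sub ((h1.const_mul _)) ((h2.const_mul _)),
      intervalIntegral.integral_const_mul, intervalIntegral.integral_const_mul]
  rw [hE] at hkey
  -- final arithmetic
  have hΓ : 0 < 1 / Real.Gamma (1 - α) := by
    have := Real.Gamma_pos_of_pos (by linarith : (0:ℝ) < 1 - α)
    positivity
  have habs : |ω t| = c := abs_of_nonneg hcnn
  rw [habs]
  set A := ∫ s in (0:ℝ)..t, (t - s) ^ (-α) * deriv g s
  set B := ∫ s in (0:ℝ)..t, (t - s) ^ (-α) * deriv ω s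
  have hstep : (2/p) * A ≤ c' * B := by linarith
  nlinarith [mul_le_mul_of_nonneg_left hstep hΓ.le]

end
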